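/- Gagliardo seminorm decomposition over a covering by balls: Let 1 < s ≤ 2 and let (B_j)_{j∈J} be a countable family of open balls in ℝ² whose union is ℝ², and suppose there exists δ > 0 such that any two points x, y ∈ ℝ² with |x − y| ≤ δ belong together to some common ball B_j. Then there is a constant C = C(s, δ) such that for every measurable v : ℝ² → ℝ: ∫_{ℝ²} ∫_{ℝ²} |v(x) − v(y)|² |x − y|^{−2s} dx dy ≤ C Σ_{j∈J} ( ‖v‖²_{L²(B_j)} + ∫_{B_j} ∫_{B_j} |v(x) − v(y)|² |x − y|^{−2s} dx dy ). -/

import Mathlib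

open MeasureTheory Set
open scoped ENNReal

noncomputable section

/-- The integrand of the Gagliardo seminorm `|v|²_{Ẇ^{s-1,2}}`:
`|v(x) − v(y)|² / |x − y|^{2s}` (valued in `ℝ≥0∞`). -/
def gagliardoKernel (s : ℝ) (v : EuclideanSpace ℝ (Fin 2) → ℝ)
    (x y : EuclideanSpace ℝ (Fin 2)) : ℝ≥0∞ :=
  ((‖v x - v y‖₊ : ℝ≥0∞) ^ 2) / ENNReal.ofReal (dist x y ^ (2 * s))

abbrev E2 := EuclideanSpace ℝ (Fin 2)

lemma aux_finite (s δ : ℝ) (hs1 : 1 < s) (hδ : 0 < δ) :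
    (∫⁻ z : E2, (if δ < ‖z‖ then (ENNReal.ofReal (‖z‖ ^ (2 * s)))⁻¹ else 0)) < ∞ := by
  have hdim : ((Module.finrank ℝ E2 : ℝ)) < 2 * s := by
    simp [finrank_euclideanSpace]; linarith
  have hM : (0:ℝ) < ((1 + δ) / δ) ^ (2 * s) := by positivity
  calc ∫⁻ z : E2, (if δ < ‖z‖ then (ENNReal.ofReal (‖z‖ ^ (2 * s)))⁻¹ else 0)
      ≤ ∫⁻ z : E2, ENNReal.ofReal (((1 + δ)/δ) ^ (2*s)) *
          ENNReal.ofReal ((1 + ‖z‖) ^ (-(2 * s))) := by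
        refine lintegral_mono fun z => ?_
        split_ifs with h
        · have hz : 0 < ‖z‖ := lt_trans hδ h
          rw [← ENNReal.ofReal_inv_of_pos (by positivity), ← ENNReal.ofReal_mul hM.le]
          apply ENNReal.ofReal_le_ofReal
          have hle : 1 + ‖z‖ ≤ ((1 + δ) / δ) * ‖z‖ := by
            have h1 : (1:ℝ) ≤ ‖z‖ / δ := (one_le_div hδ).2 h.le
            rw [div_mul_eq_mul_div, le_div_iff₀ hδ]
            nlinarith
          have key : (1 + ‖z‖) ^ (2*s) ≤ (((1+δ)/δ) ^ (2*s)) * ‖z‖ ^ (2*s) := by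
            rw [← Real.mul_rpow (by positivity) hz.le]
            exact Real.rpow_le_rpow (by positivity) hle (by positivity)
          rw [Real.rpow_neg (by positivity)]
          have h1 : (0:ℝ) < ‖z‖ ^ (2*s) := by positivity
          have h2 : (0:ℝ) < (1+‖z‖) ^ (2*s) := by positivity
          rw [← one_div, ← one_div, mul_one_div, div_le_div_iff₀ h1 h2]
          linarith [key]
        · exact zero_le
    _ < ∞ := by
        rw [lintegral_const_mul']
        · exact ENNReal.mul_lt_top ENNReal.ofReal_lt_top (finite_integral_one_add_norm hdim)
        · exact ENNReal.ofReal_ne_top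

set_option maxHeartbeats 1000000 in
/-- **Gagliardo seminorm decomposition over a covering by balls.** Let `1 < s ≤ 2` and let
`(B_j)_{j ∈ J}` be a countable family of open balls covering `ℝ²` such that any two points at
distance `≤ δ` lie in a common ball. Then
`|v|²_{Ẇ^{s-1,2}(ℝ²)} ≤ C(s,δ) Σ_j ( ‖v‖²_{L²(B_j)} + |v|²_{Ẇ^{s-1,2}(B_j)} )`. -/
theorem gagliardo_seminorm_ball_decomposition (s δ : ℝ) (hs1 : 1 < s) (hs2 : s ≤ 2)
    (hδ : 0 < δ) :
    ∃ C > 0, ∀ (ι : Type) (_ : Countable ι)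
      (c : ι → EuclideanSpace ℝ (Fin 2)) (r : ι → ℝ),
      (∀ j, 0 < r j) →
      (∀ x : EuclideanSpace ℝ (Fin 2), ∃ j, x ∈ Metric.ball (c j) (r j)) →
      (∀ x y : EuclideanSpace ℝ (Fin 2), dist x y ≤ δ →
        ∃ j, x ∈ Metric.ball (c j) (r j) ∧ y ∈ Metric.ball (c j) (r j)) →
      ∀ v : EuclideanSpace ℝ (Fin 2) → ℝ, Measurable v →
        (∫⁻ x, ∫⁻ y, gagliardoKernel s v x y) ≤
          ENNReal.ofReal C *
            ∑' j : ι,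
              ((∫⁻ x in Metric.ball (c j) (r j), (‖v x‖₊ : ℝ≥0∞) ^ 2) +
                ∫⁻ x in Metric.ball (c j) (r j), ∫⁻ y in Metric.ball (c j) (r j),
                  gagliardoKernel s v x y) := by
  classical
  set c₀ : ℝ≥0∞ := ∫⁻ z : E2, (if δ < ‖z‖ then (ENNReal.ofReal (‖z‖ ^ (2 * s)))⁻¹ else 0)
    with hc₀
  have hc₀fin : c₀ < ∞ := aux_finite s δ hs1 hδ
  refine ⟨1 + 8 * c₀.toReal, by positivity, ?_⟩
  intro ι _ c r hr hcov hpair v hv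
  set B : ι → Set E2 := fun j => Metric.ball (c j) (r j) with hB
  set K : E2 → E2 → ℝ≥0∞ := gagliardoKernel s v with hKdef
  have hKm : Measurable (fun p : E2 × E2 => K p.1 p.2) := by
    apply Measurable.div
    · exact (((hv.comp measurable_fst).sub (hv.comp measurable_snd)).nnnorm.coe_nnreal_ennreal).pow_const 2
    · exact (measurable_dist.pow_const (2*s)).ennreal_ofReal
  have hKx : ∀ x, Measurable (K x) := fun x => hKm.comp (measurable_prodMk_left)
  set W : E2 → E2 → ℝ≥0∞ := fun x y =>
    if δ < dist x y then (ENNReal.ofReal (dist x y ^ (2*s)))⁻¹ else 0 with hWdef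
  have hWm : Measurable (fun p : E2 × E2 => W p.1 p.2) := by
    apply Measurable.ite (measurableSet_lt measurable_const measurable_dist)
    · exact ((measurable_dist.pow_const (2*s)).ennreal_ofReal).inv
    · exact measurable_const
  have hWsymm : ∀ x y, W x y = W y x := by
    intro x y; simp only [hWdef, dist_comm]
  have hWint : ∀ x, ∫⁻ y, W x y = c₀ := by
    intro x
    have h1 : ∀ y : E2, W x y =
        (fun z : E2 => if δ < ‖z‖ then (ENNReal.ofReal (‖z‖ ^ (2 * s)))⁻¹ else 0) (y - x) := by
      intro y
      simp only [hWdef]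
      rw [dist_eq_norm, ← norm_neg (x - y), neg_sub]
    simp_rw [h1]
    exact lintegral_sub_right_eq_self
      (fun z : E2 => if δ < ‖z‖ then (ENNReal.ofReal (‖z‖ ^ (2 * s)))⁻¹ else 0) x
  have hWint' : ∀ y, ∫⁻ x, W x y = c₀ := by
    intro y
    simp_rw [fun x => hWsymm x y]
    exact hWint y
  have hvm2 : Measurable fun x => (‖v x‖₊ : ℝ≥0∞) ^ 2 :=
    (hv.nnnorm.coe_nnreal_ennreal).pow_const 2
  -- near and far majorants
  set N : E2 → E2 → ℝ≥0∞ := fun x y =>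
    ∑' j, (B j).indicator (fun x' => (B j).indicator (fun y' => K x' y') y) x with hNdef
  set F : E2 → E2 → ℝ≥0∞ := fun x y =>
    4 * ((‖v x‖₊ : ℝ≥0∞) ^ 2 + (‖v y‖₊ : ℝ≥0∞) ^ 2) * W x y with hFdef
  have hpoint : ∀ x y, K x y ≤ N x y + F x y := by
    intro x y
    rcases le_or_gt (dist x y) δ with hle | hlt
    · obtain ⟨j, hxj, hyj⟩ := hpair x y hle
      refine le_add_right (le_trans ?_ (ENNReal.le_tsum j))
      rw [indicator_of_mem hxj, indicator_of_mem hyj]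
    · refine le_add_left ?_
      have hWxy : W x y = (ENNReal.ofReal (dist x y ^ (2*s)))⁻¹ := if_pos hlt
      have hsq : (‖v x - v y‖₊ : ℝ≥0∞) ^ 2 ≤ 4 * ((‖v x‖₊ : ℝ≥0∞) ^ 2 + (‖v y‖₊ : ℝ≥0∞) ^ 2) := by
        have h1 : (‖v x - v y‖₊ : ℝ≥0∞) ≤ (‖v x‖₊ : ℝ≥0∞) + (‖v y‖₊ : ℝ≥0∞) := by
          exact_mod_cast nnnorm_sub_le (v x) (v y)
        have h2 : (‖v x‖₊ : ℝ≥0∞) + (‖v y‖₊ : ℝ≥0∞) ≤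
            2 * ((‖v x‖₊ : ℝ≥0∞) ⊔ (‖v y‖₊ : ℝ≥0∞)) := by
          rw [two_mul]
          exact add_le_add le_sup_left le_sup_right
        calc (‖v x - v y‖₊ : ℝ≥0∞) ^ 2 ≤ (2 * ((‖v x‖₊ : ℝ≥0∞) ⊔ (‖v y‖₊ : ℝ≥0∞))) ^ 2 :=
              pow_le_pow_left₀ (zero_le) (h1.trans h2) 2
          _ = 4 * ((‖v x‖₊ : ℝ≥0∞) ⊔ (‖v y‖₊ : ℝ≥0∞)) ^ 2 := by ring
          _ ≤ 4 * ((‖v x‖₊ : ℝ≥0∞) ^ 2 + (‖v y‖₊ : ℝ≥0∞) ^ 2) := by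
              gcongr
              rcases le_total (‖v x‖₊ : ℝ≥0∞) (‖v y‖₊ : ℝ≥0∞) with h | h
              · rw [sup_eq_right.2 h]; exact le_add_self
              · rw [sup_eq_left.2 h]; exact le_self_add
      calc K x y = (‖v x - v y‖₊ : ℝ≥0∞) ^ 2 * (ENNReal.ofReal (dist x y ^ (2*s)))⁻¹ := by
            rw [hKdef]; rfl
        _ ≤ 4 * ((‖v x‖₊ : ℝ≥0∞) ^ 2 + (‖v y‖₊ : ℝ≥0∞) ^ 2) *
              (ENNReal.ofReal (dist x y ^ (2*s)))⁻¹ := by gcongr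
        _ = F x y := by rw [hFdef]; simp only [hWxy]
  -- measurability of slices of N
  have hNterm : ∀ j x, Measurable fun y =>
      (B j).indicator (fun x' => (B j).indicator (fun y' => K x' y') y) x := by
    intro j x
    by_cases hx : x ∈ B j
    · simp only [indicator_of_mem hx]
      exact (hKx x).indicator Metric.isOpen_ball.measurableSet
    · simp only [indicator_of_notMem hx]
      exact measurable_const
  have hNx : ∀ x, Measurable (fun y => N x y) := by
    intro x
    exact Measurable.ennreal_tsum fun j => hNterm j x
  have hMj : ∀ j, Measurable fun x' => ∫⁻ y in B j, K x' y := fun j =>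
    Measurable.lintegral_prod_right hKm
  have h1 : ∀ x, (∫⁻ y, N x y) =
      ∑' j, (B j).indicator (fun x' => ∫⁻ y in B j, K x' y) x := by
    intro x
    rw [hNdef]
    rw [lintegral_tsum fun j => (hNterm j x).aemeasurable]
    congr 1; funext j
    by_cases hx : x ∈ B j
    · simp only [indicator_of_mem hx]
      rw [lintegral_indicator Metric.isOpen_ball.measurableSet]
    · simp only [indicator_of_notMem hx, lintegral_zero]
  have hMmeas : Measurable fun x =>
      ∑' j, (B j).indicator (fun x' => ∫⁻ y in B j, K x' y) x :=
    Measurable.ennreal_tsum fun j => (hMj j).indicator Metric.isOpen_ball.measurableSet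
  have hnear : (∫⁻ x, ∑' j, (B j).indicator (fun x' => ∫⁻ y in B j, K x' y) x)
      = ∑' j, ∫⁻ x in B j, ∫⁻ y in B j, K x y := by
    rw [lintegral_tsum fun j =>
      ((hMj j).indicator Metric.isOpen_ball.measurableSet).aemeasurable]
    congr 1; funext j
    rw [lintegral_indicator Metric.isOpen_ball.measurableSet]
  have hsplit : (∫⁻ x, ∫⁻ y, K x y) ≤
      (∑' j, ∫⁻ x in B j, ∫⁻ y in B j, K x y) + ∫⁻ x, ∫⁻ y, F x y := by
    calc (∫⁻ x, ∫⁻ y, K x y) ≤ ∫⁻ x, ∫⁻ y, (N x y + F x y) :=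
          lintegral_mono fun x => lintegral_mono fun y => hpoint x y
      _ = ∫⁻ x, ((∑' j, (B j).indicator (fun x' => ∫⁻ y in B j, K x' y) x) + ∫⁻ y, F x y) := by
          congr 1; funext x
          rw [lintegral_add_left (hNx x), h1 x]
      _ = (∫⁻ x, ∑' j, (B j).indicator (fun x' => ∫⁻ y in B j, K x' y) x) + ∫⁻ x, ∫⁻ y, F x y :=
          lintegral_add_left hMmeas _
      _ = (∑' j, ∫⁻ x in B j, ∫⁻ y in B j, K x y) + ∫⁻ x, ∫⁻ y, F x y := by rw [hnear]
  have hfar : (∫⁻ x, ∫⁻ y, F x y) = 8 * c₀ * ∫⁻ x, (‖v x‖₊ : ℝ≥0∞) ^ 2 := by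
    have hexp : ∀ x y, F x y =
        4 * (‖v x‖₊ : ℝ≥0∞) ^ 2 * W x y + 4 * (‖v y‖₊ : ℝ≥0∞) ^ 2 * W x y := by
      intro x y; rw [hFdef]; ring
    have hWx : ∀ x, Measurable (W x) := by
      intro x
      apply Measurable.ite (measurableSet_lt measurable_const (measurable_const.dist measurable_id))
      · exact (((measurable_const.dist measurable_id).pow_const (2*s)).ennreal_ofReal).inv
      · exact measurable_const
    have hf1 : ∀ x, (∫⁻ y, F x y) =
        4 * (‖v x‖₊ : ℝ≥0∞) ^ 2 * c₀ + ∫⁻ y, 4 * (‖v y‖₊ : ℝ≥0∞) ^ 2 * W x y := by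
      intro x
      simp_rw [hexp x]
      rw [lintegral_add_left ((hWx x).const_mul _)]
      rw [lintegral_const_mul _ (hWx x), hWint x]
    simp_rw [hf1]
    rw [lintegral_add_left ((hvm2.const_mul _).mul_const _)]
    have h2 : (∫⁻ x, 4 * (‖v x‖₊ : ℝ≥0∞) ^ 2 * c₀) = 4 * c₀ * ∫⁻ x, (‖v x‖₊ : ℝ≥0∞) ^ 2 := by
      simp_rw [show ∀ x : E2, 4 * (‖v x‖₊ : ℝ≥0∞) ^ 2 * c₀ = (4 * c₀) * (‖v x‖₊ : ℝ≥0∞) ^ 2 by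
        intro x; ring]
      exact lintegral_const_mul _ hvm2
    have h3 : (∫⁻ x, ∫⁻ y, 4 * (‖v y‖₊ : ℝ≥0∞) ^ 2 * W x y) =
        4 * c₀ * ∫⁻ y, (‖v y‖₊ : ℝ≥0∞) ^ 2 := by
      rw [lintegral_lintegral_swap
        ((((hvm2.comp measurable_snd).const_mul _).mul hWm).aemeasurable)]
      have h4 : ∀ y, (∫⁻ x, 4 * (‖v y‖₊ : ℝ≥0∞) ^ 2 * W x y) =
          (4 * c₀) * (‖v y‖₊ : ℝ≥0∞) ^ 2 := by
        intro y
        have hWy : Measurable fun x => W x y := by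
          have he : (fun x => W x y) = W y := funext fun x => hWsymm x y
          rw [he]; exact hWx y
        rw [lintegral_const_mul _ hWy, hWint' y]
        ring
      simp_rw [h4]
      exact lintegral_const_mul _ hvm2
    rw [h2, h3]
    ring
  have hL2 : (∫⁻ x, (‖v x‖₊ : ℝ≥0∞) ^ 2) ≤ ∑' j, ∫⁻ x in B j, (‖v x‖₊ : ℝ≥0∞) ^ 2 := by
    have hU : (⋃ j, B j) = univ := eq_univ_of_forall fun x => mem_iUnion.2 (hcov x)
    calc (∫⁻ x, (‖v x‖₊ : ℝ≥0∞) ^ 2) = ∫⁻ x in ⋃ j, B j, (‖v x‖₊ : ℝ≥0∞) ^ 2 := by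
          rw [hU, Measure.restrict_univ]
      _ ≤ ∑' j, ∫⁻ x in B j, (‖v x‖₊ : ℝ≥0∞) ^ 2 := lintegral_iUnion_le _ _
  set S := ∑' j : ι, ((∫⁻ x in B j, (‖v x‖₊ : ℝ≥0∞) ^ 2) + ∫⁻ x in B j, ∫⁻ y in B j, K x y)
    with hS
  have hGS : (∑' j, ∫⁻ x in B j, ∫⁻ y in B j, K x y) ≤ S :=
    ENNReal.tsum_le_tsum fun j => le_add_self
  have hLS : (∑' j, ∫⁻ x in B j, (‖v x‖₊ : ℝ≥0∞) ^ 2) ≤ S :=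
    ENNReal.tsum_le_tsum fun j => le_self_add
  have hC : ENNReal.ofReal (1 + 8 * c₀.toReal) = 1 + 8 * c₀ := by
    rw [ENNReal.ofReal_add zero_le_one (by positivity), ENNReal.ofReal_one,
      ENNReal.ofReal_mul (by norm_num), ENNReal.ofReal_toReal hc₀fin.ne]
    norm_num
  calc (∫⁻ x, ∫⁻ y, K x y)
      ≤ (∑' j, ∫⁻ x in B j, ∫⁻ y in B j, K x y) + ∫⁻ x, ∫⁻ y, F x y := hsplit
    _ ≤ S + 8 * c₀ * S := by
        refine add_le_add hGS ?_
        rw [hfar]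
        exact mul_le_mul_right (hL2.trans hLS) _
    _ = ENNReal.ofReal (1 + 8 * c₀.toReal) * S := by
        rw [hC, add_mul, one_mul]
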